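/- Let G be a simple connected graph with m = d+1 vertices, incidence matrix A_G ∈ ℤ^{(d+1)×n}, and let σ ∈ Aut(G) be a graph automorphism. Then ω ∈ ∇_{A_G,𝟏} ⊂ ℂ^{d+1} if and only if σ(ω) ∈ ∇_{A_G,𝟏}, where σ acts on ω by permuting coordinates. The key fact is that the map f_G : (ℂ*)^{d+1} → ℂ^{d+1}, f_G(v) = A_G·ψ_{A_G,𝟏}(v), whose k-th coordinate equals Σ_{(k,j)∈E_k} (1/(2i))·(v_k v_j^{−1} − v_k^{−1} v_j) (summing over edges adjacent to vertex k), is Aut(G)-equivariant: f_G(σ(v)) = σ(f_G(v)) for all v ∈ (ℂ*)^{d+1}. -/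
import Mathlib


noncomputable section


/-- A subset of `ℂⁿ` is Zariski closed if it is the common zero locus
of a set of polynomials. -/
def ZClosed {n : ℕ} (S : Set (Fin n → ℂ)) : Prop :=
  ∃ I : Set (MvPolynomial (Fin n) ℂ),
    S = {x | ∀ p ∈ I, MvPolynomial.eval x p = 0}

/-- Irreducibility with respect to the Zariski topology on `ℂⁿ`. -/
def ZIrred {n : ℕ} (S : Set (Fin n → ℂ)) : Prop :=
  S.Nonempty ∧ ∀ F G : Set (Fin n → ℂ), ZClosed F → ZClosed G →
    S ⊆ F ∪ G → (S ⊆ F ∨ S ⊆ G)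

/-- Dimension of a subset of `ℂⁿ`: Krull dimension of the poset of irreducible
Zariski closed subsets contained in it. -/
def ZDim {n : ℕ} (S : Set (Fin n → ℂ)) : WithBot ℕ∞ :=
  Order.krullDim {T : Set (Fin n → ℂ) // ZClosed T ∧ ZIrred T ∧ T ⊆ S}

/-- Zariski closure in `ℂⁿ`. -/
def ZClosure {n : ℕ} (S : Set (Fin n → ℂ)) : Set (Fin n → ℂ) :=
  ⋂₀ {F | ZClosed F ∧ S ⊆ F}

/-- A property `P` of points of `ℂ^σ` holds generically if it holds on the
nonvanishing locus of some nonzero polynomial. -/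
def GenericProp {σ : Type} (P : (σ → ℂ) → Prop) : Prop :=
  ∃ p : MvPolynomial σ ℂ, p ≠ 0 ∧ ∀ x : σ → ℂ, MvPolynomial.eval x p ≠ 0 → P x

/-- `S ⊆ ℂⁿ` (of dimension `d`) has degree `k`: a generic affine-linear subspace of
codimension `d` meets `S` in exactly `k` points. -/
def HasVarietyDegree {n : ℕ} (S : Set (Fin n → ℂ)) (d k : ℕ) : Prop :=
  GenericProp (σ := Fin d × Option (Fin n)) fun c =>
    ({x ∈ S | ∀ j : Fin d, c (j, none) + ∑ i : Fin n, c (j, some i) * x i = 0}).ncard = k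

/-- The parametrization `ψ_{A,β}` with scaling vector `β`. -/
def psiBeta {d n : ℕ} (A : Matrix (Fin d) (Fin n) ℤ) (β : Fin n → ℂ) (v : Fin d → ℂ) :
    Fin n → ℂ :=
  fun ℓ => (β ℓ * ∏ k, v k ^ (A k ℓ) + (β ℓ)⁻¹ * ∏ k, v k ^ (-(A k ℓ))) / 2

/-- The toric Jacobi matrix `J_{A,b}(v) = ½ A · diag(β_ℓ v^{a_ℓ} - β_ℓ⁻¹ v^{-a_ℓ}) · Aᵀ`. -/
def toricJac {d n : ℕ} (A : Matrix (Fin d) (Fin n) ℤ) (β : Fin n → ℂ) (v : Fin d → ℂ) :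
    Matrix (Fin d) (Fin d) ℂ :=
  fun j k => (1 / 2 : ℂ) * ∑ ℓ, (A j ℓ : ℂ) *
    (β ℓ * ∏ k', v k' ^ (A k' ℓ) - (β ℓ)⁻¹ * ∏ k', v k' ^ (-(A k' ℓ))) * (A k ℓ : ℂ)

/-- The incidence variety `W_{A,b} = {(v,ω) : A ψ_{A,b}(v) = ω}`. -/
def Wset {d n : ℕ} (A : Matrix (Fin d) (Fin n) ℤ) (β : Fin n → ℂ) :
    Set ((Fin d → ℂ) × (Fin d → ℂ)) :=
  {p | (∀ k, p.1 k ≠ 0) ∧ ∀ i, ∑ ℓ, (A i ℓ : ℂ) * psiBeta A β p.1 ℓ = p.2 i}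

/-- The Lissajous discriminant `∇_{A,b}`, the Zariski closure of the branch locus. -/
def discLocus {d n : ℕ} (A : Matrix (Fin d) (Fin n) ℤ) (β : Fin n → ℂ) :
    Set (Fin d → ℂ) :=
  ZClosure {ω | ∃ v : Fin d → ℂ, (v, ω) ∈ Wset A β ∧ (toricJac A β v).det = 0}

/-- The projection `pr_ω : W → ℂ^d` has degree `e`: generic fibers have `e` points. -/
def HasProjDegree {d : ℕ} (W : Set ((Fin d → ℂ) × (Fin d → ℂ))) (e : ℕ) : Prop :=
  ∃ U : Set (Fin d → ℂ), ZClosed U ∧ U ≠ Set.univ ∧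
    ∀ ω ∉ U, ({v | (v, ω) ∈ W}).ncard = e

/-- The Lissajous discriminant of the full incidence matrix `A_G` for `b = 𝟏`:
the Zariski closure of the set of `ω` admitting a critical solution `v` with
`v_{d+1} = 1` and `rank J_{A_G,𝟏}(v) < d`. -/
def discLocusG {d n : ℕ} (AG : Matrix (Fin (d + 1)) (Fin n) ℤ) :
    Set (Fin (d + 1) → ℂ) :=
  ZClosure {ω | ∃ v : Fin (d + 1) → ℂ, (∀ k, v k ≠ 0) ∧ v (Fin.last d) = 1 ∧
    (∀ i, ∑ ℓ, (AG i ℓ : ℂ) * psiBeta AG (fun _ => -Complex.I) v ℓ = ω i) ∧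
    (toricJac AG (fun _ => -Complex.I) v).rank < d}

section Aux

open Complex

lemma prod_zpow_pair {m : ℕ} (v : Fin m → ℂ) (s t : Fin m) (hst : s ≠ t) :
    (∏ k, v k ^ ((if k = s then 1 else 0) - (if k = t then (1:ℤ) else 0))) = v s * (v t)⁻¹ := by
  classical
  rw [← Finset.prod_subset (Finset.subset_univ ({s, t} : Finset (Fin m)))
      (fun x _ hx => by
        simp only [Finset.mem_insert, Finset.mem_singleton, not_or] at hx
        simp [hx.1, hx.2])]
  rw [Finset.prod_insert (by simpa using hst), Finset.prod_singleton]
  simp [hst, Ne.symm hst]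

variable {d n : ℕ} {src tgt : Fin n → Fin (d + 1)}
  {AG : Matrix (Fin (d + 1)) (Fin n) ℤ}

lemma psi_formula (hst : ∀ l, src l ≠ tgt l)
    (hAG : ∀ (i : Fin (d + 1)) (l : Fin n), AG i l =
      (if i = src l then 1 else 0) - (if i = tgt l then 1 else 0))
    (v : Fin (d + 1) → ℂ) (ℓ : Fin n) :
    psiBeta AG (fun _ => -Complex.I) v ℓ =
      (-Complex.I * (v (src ℓ) * (v (tgt ℓ))⁻¹) + Complex.I * (v (tgt ℓ) * (v (src ℓ))⁻¹)) / 2 := by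
  have h1 : (∏ k, v k ^ (AG k ℓ)) = v (src ℓ) * (v (tgt ℓ))⁻¹ := by
    rw [Finset.prod_congr rfl (fun k _ => by rw [hAG k ℓ])]
    exact prod_zpow_pair v _ _ (hst ℓ)
  have h2 : (∏ k, v k ^ (-(AG k ℓ))) = v (tgt ℓ) * (v (src ℓ))⁻¹ := by
    rw [Finset.prod_congr rfl (fun k _ => by rw [show -(AG k ℓ) =
      (if k = tgt ℓ then 1 else 0) - (if k = src ℓ then (1:ℤ) else 0) from by rw [hAG k ℓ]; ring])]
    exact prod_zpow_pair v _ _ (hst ℓ).symm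
  unfold psiBeta
  rw [h1, h2, inv_neg, Complex.inv_I, neg_neg]

lemma jacfac_formula (hst : ∀ l, src l ≠ tgt l)
    (hAG : ∀ (i : Fin (d + 1)) (l : Fin n), AG i l =
      (if i = src l then 1 else 0) - (if i = tgt l then 1 else 0))
    (v : Fin (d + 1) → ℂ) (ℓ : Fin n) :
    (-Complex.I) * (∏ k', v k' ^ (AG k' ℓ)) - (-Complex.I)⁻¹ * (∏ k', v k' ^ (-(AG k' ℓ))) =
      -Complex.I * (v (src ℓ) * (v (tgt ℓ))⁻¹ + v (tgt ℓ) * (v (src ℓ))⁻¹) := by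
  have h1 : (∏ k, v k ^ (AG k ℓ)) = v (src ℓ) * (v (tgt ℓ))⁻¹ := by
    rw [Finset.prod_congr rfl (fun k _ => by rw [hAG k ℓ])]
    exact prod_zpow_pair v _ _ (hst ℓ)
  have h2 : (∏ k, v k ^ (-(AG k ℓ))) = v (tgt ℓ) * (v (src ℓ))⁻¹ := by
    rw [Finset.prod_congr rfl (fun k _ => by rw [show -(AG k ℓ) =
      (if k = tgt ℓ then 1 else 0) - (if k = src ℓ then (1:ℤ) else 0) from by rw [hAG k ℓ]; ring])]
    exact prod_zpow_pair v _ _ (hst ℓ).symm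
  rw [h1, h2, inv_neg, Complex.inv_I, neg_neg]
  ring

lemma ratio_scale {c : ℂ} (hc : c ≠ 0) (a b : ℂ) : (c * a) * (c * b)⁻¹ = a * b⁻¹ := by
  rw [mul_inv, show (c * a) * (c⁻¹ * b⁻¹) = (c * c⁻¹) * (a * b⁻¹) from by ring,
    mul_inv_cancel₀ hc, one_mul]

lemma psi_scale (hst : ∀ l, src l ≠ tgt l)
    (hAG : ∀ (i : Fin (d + 1)) (l : Fin n), AG i l =
      (if i = src l then 1 else 0) - (if i = tgt l then 1 else 0))
    {c : ℂ} (hc : c ≠ 0) {u w : Fin (d + 1) → ℂ} (hw : ∀ k, w k = c * u k) (ℓ : Fin n) :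
    psiBeta AG (fun _ => -Complex.I) w ℓ = psiBeta AG (fun _ => -Complex.I) u ℓ := by
  rw [psi_formula hst hAG, psi_formula hst hAG, hw, hw,
    ratio_scale hc, ratio_scale hc]

lemma jac_scale (hst : ∀ l, src l ≠ tgt l)
    (hAG : ∀ (i : Fin (d + 1)) (l : Fin n), AG i l =
      (if i = src l then 1 else 0) - (if i = tgt l then 1 else 0))
    {c : ℂ} (hc : c ≠ 0) {u w : Fin (d + 1) → ℂ} (hw : ∀ k, w k = c * u k) :
    toricJac AG (fun _ => -Complex.I) w = toricJac AG (fun _ => -Complex.I) u := by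
  ext j k
  unfold toricJac
  congr 1
  refine Finset.sum_congr rfl (fun ℓ _ => ?_)
  rw [jacfac_formula hst hAG, jacfac_formula hst hAG, hw, hw,
    ratio_scale hc, ratio_scale hc]

variable {G : SimpleGraph (Fin (d + 1))}

lemma exists_tau (hadj : ∀ l, G.Adj (src l) (tgt l))
    (hedges : ∀ e ∈ G.edgeSet, ∃! l : Fin n, e = s(src l, tgt l))
    (ρ : G ≃g G) :
    ∃ τ : Fin n → Fin n, Function.Bijective τ ∧
      ∀ ℓ, s(ρ.symm (src ℓ), ρ.symm (tgt ℓ)) = s(src (τ ℓ), tgt (τ ℓ)) := by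
  classical
  have hmem : ∀ ℓ, s(ρ.symm (src ℓ), ρ.symm (tgt ℓ)) ∈ G.edgeSet := fun ℓ =>
    (G.mem_edgeSet).mpr ((ρ.symm).map_adj_iff.mpr (hadj ℓ))
  choose τ hτ _ using fun ℓ => (hedges _ (hmem ℓ))
  refine ⟨τ, ?_, hτ⟩
  rw [Fintype.bijective_iff_injective_and_card]
  refine ⟨fun a b hab => ?_, rfl⟩
  have h2 : s(ρ.symm (src a), ρ.symm (tgt a)) = s(ρ.symm (src b), ρ.symm (tgt b)) := by
    rw [hτ a, hτ b, hab]
  have h3 : s(src a, tgt a) = s(src b, tgt b) := by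
    have := congrArg (Sym2.map ρ) h2
    simpa using this
  obtain ⟨l₀, -, huniq⟩ := hedges s(src a, tgt a) ((G.mem_edgeSet).mpr (hadj a))
  exact (huniq a rfl).trans (huniq b h3).symm

lemma equiv_sum (hadj : ∀ l, G.Adj (src l) (tgt l))
    (hedges : ∀ e ∈ G.edgeSet, ∃! l : Fin n, e = s(src l, tgt l))
    (hAG : ∀ (i : Fin (d + 1)) (l : Fin n), AG i l =
      (if i = src l then 1 else 0) - (if i = tgt l then 1 else 0))
    (ρ : G ≃g G) (v : Fin (d + 1) → ℂ) (k : Fin (d + 1)) :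
    ∑ ℓ, (AG k ℓ : ℂ) * psiBeta AG (fun _ => -Complex.I) (fun k' => v (ρ.symm k')) ℓ
      = ∑ ℓ, (AG (ρ.symm k) ℓ : ℂ) * psiBeta AG (fun _ => -Complex.I) v ℓ := by
  have hst : ∀ l, src l ≠ tgt l := fun l => (hadj l).ne
  obtain ⟨τ, hbij, hτ⟩ := exists_tau hadj hedges ρ
  rw [← hbij.sum_comp (fun m => (AG (ρ.symm k) m : ℂ) * psiBeta AG (fun _ => -Complex.I) v m)]
  refine Finset.sum_congr rfl (fun ℓ _ => ?_)
  have hinj : Function.Injective (ρ.symm : Fin (d + 1) → Fin (d + 1)) := ρ.symm.injective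
  simp only [psi_formula hst hAG, hAG k ℓ, hAG (ρ.symm k) (τ ℓ)]
  rcases Sym2.eq_iff.mp (hτ ℓ) with ⟨h1, h2⟩ | ⟨h1, h2⟩ <;>
    rw [← h1, ← h2] <;> simp only [hinj.eq_iff] <;> push_cast <;>
    by_cases hs : k = src ℓ <;> by_cases ht : k = tgt ℓ <;> simp [hs, ht] <;> ring

lemma jac_perm (hadj : ∀ l, G.Adj (src l) (tgt l))
    (hedges : ∀ e ∈ G.edgeSet, ∃! l : Fin n, e = s(src l, tgt l))
    (hAG : ∀ (i : Fin (d + 1)) (l : Fin n), AG i l =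
      (if i = src l then 1 else 0) - (if i = tgt l then 1 else 0))
    (ρ : G ≃g G) (v : Fin (d + 1) → ℂ) :
    toricJac AG (fun _ => -Complex.I) (fun k' => v (ρ.symm k')) =
      (toricJac AG (fun _ => -Complex.I) v).submatrix
        (ρ.symm.toEquiv : Fin (d + 1) → Fin (d + 1))
        (ρ.symm.toEquiv : Fin (d + 1) → Fin (d + 1)) := by
  have hst : ∀ l, src l ≠ tgt l := fun l => (hadj l).ne
  obtain ⟨τ, hbij, hτ⟩ := exists_tau hadj hedges ρ
  ext j k
  show toricJac AG (fun _ => -Complex.I) (fun k' => v (ρ.symm k')) j k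
    = toricJac AG (fun _ => -Complex.I) v (ρ.symm j) (ρ.symm k)
  unfold toricJac
  congr 1
  rw [← hbij.sum_comp (fun m => (AG (ρ.symm j) m : ℂ) *
    ((-Complex.I) * (∏ k', v k' ^ (AG k' m)) -
      (-Complex.I)⁻¹ * (∏ k', v k' ^ (-(AG k' m)))) * (AG (ρ.symm k) m : ℂ))]
  refine Finset.sum_congr rfl (fun ℓ _ => ?_)
  have hinj : Function.Injective (ρ.symm : Fin (d + 1) → Fin (d + 1)) := ρ.symm.injective
  simp only [jacfac_formula hst hAG, hAG j ℓ, hAG k ℓ, hAG (ρ.symm j) (τ ℓ),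
    hAG (ρ.symm k) (τ ℓ)]
  rcases Sym2.eq_iff.mp (hτ ℓ) with ⟨h1, h2⟩ | ⟨h1, h2⟩ <;>
    rw [← h1, ← h2] <;> simp only [hinj.eq_iff] <;> push_cast <;>
    by_cases hs : j = src ℓ <;> by_cases ht : j = tgt ℓ <;>
    by_cases hs' : k = src ℓ <;> by_cases ht' : k = tgt ℓ <;>
    simp [hs, ht, hs', ht'] <;> ring

/-- Preimage of a Zariski closed set under coordinate substitution is closed. -/
lemma zclosed_comp {m : ℕ} (g : Fin m → Fin m) {F : Set (Fin m → ℂ)} (hF : ZClosed F) :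
    ZClosed {x : Fin m → ℂ | (fun k => x (g k)) ∈ F} := by
  obtain ⟨I, rfl⟩ := hF
  refine ⟨MvPolynomial.rename g '' I, ?_⟩
  ext x
  simp only [Set.mem_setOf_eq, Set.forall_mem_image, MvPolynomial.eval_rename]
  rfl

lemma zclosure_stable {m : ℕ} (g : Fin m → Fin m) (S : Set (Fin m → ℂ))
    (hS : ∀ x ∈ S, (fun k => x (g k)) ∈ S)
    (x : Fin m → ℂ) (hx : x ∈ ZClosure S) : (fun k => x (g k)) ∈ ZClosure S := by
  rw [ZClosure, Set.mem_sInter]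
  rintro F ⟨hFc, hFS⟩
  have h2 : S ⊆ {y : Fin m → ℂ | (fun k => y (g k)) ∈ F} := fun s hs => hFS (hS s hs)
  have hxm : x ∈ {y : Fin m → ℂ | (fun k => y (g k)) ∈ F} := by
    rw [ZClosure, Set.mem_sInter] at hx
    exact hx _ ⟨zclosed_comp g hFc, h2⟩
  exact hxm

end Aux


/-- Proposition 6.7: the map `f_G(v) = A_G ψ_{A_G,𝟏}(v)` is `Aut(G)`-equivariant, and
consequently the Lissajous discriminant `∇_{A_G,𝟏}` is stable under the coordinate
permutation action of every graph automorphism `σ`. -/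
theorem stmt19 {d n : ℕ} (G : SimpleGraph (Fin (d + 1))) (hconn : G.Connected)
    (src tgt : Fin n → Fin (d + 1))
    (hadj : ∀ l, G.Adj (src l) (tgt l))
    (hedges : ∀ e ∈ G.edgeSet, ∃! l : Fin n, e = s(src l, tgt l))
    (AG : Matrix (Fin (d + 1)) (Fin n) ℤ)
    (hAG : ∀ (i : Fin (d + 1)) (l : Fin n), AG i l =
      (if i = src l then 1 else 0) - (if i = tgt l then 1 else 0))
    (σ : G ≃g G) :
    (∀ v : Fin (d + 1) → ℂ, (∀ k, v k ≠ 0) →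
      (fun k => ∑ ℓ, (AG k ℓ : ℂ) *
        psiBeta AG (fun _ => -Complex.I) (fun k' => v (σ.symm k')) ℓ) =
      fun k => ∑ ℓ, (AG (σ.symm k) ℓ : ℂ) *
        psiBeta AG (fun _ => -Complex.I) v ℓ) ∧
    (∀ ω : Fin (d + 1) → ℂ, ω ∈ discLocusG AG ↔
      (fun k => ω (σ.symm k)) ∈ discLocusG AG) := by
  
  constructor
  · intro v _
    funext k
    exact equiv_sum hadj hedges hAG σ v k
  · have hst : ∀ l, src l ≠ tgt l := fun l => (hadj l).ne
    set Sset : Set (Fin (d + 1) → ℂ) :=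
      {ω | ∃ v : Fin (d + 1) → ℂ, (∀ k, v k ≠ 0) ∧ v (Fin.last d) = 1 ∧
        (∀ i, ∑ ℓ, (AG i ℓ : ℂ) * psiBeta AG (fun _ => -Complex.I) v ℓ = ω i) ∧
        (toricJac AG (fun _ => -Complex.I) v).rank < d} with hSset
    have Sstab : ∀ (ρ : G ≃g G), ∀ ω ∈ Sset, (fun k => ω (ρ.symm k)) ∈ Sset := by
      rintro ρ ω ⟨v, hv0, hvl, hsum, hrank⟩
      have hcne : (v (ρ.symm (Fin.last d)))⁻¹ ≠ 0 := inv_ne_zero (hv0 _)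
      refine ⟨fun k => (v (ρ.symm (Fin.last d)))⁻¹ * v (ρ.symm k),
        fun k => mul_ne_zero hcne (hv0 _), inv_mul_cancel₀ (hv0 _), ?_, ?_⟩
      · intro i
        have e1 : ∑ ℓ, (AG i ℓ : ℂ) * psiBeta AG (fun _ => -Complex.I)
            (fun k => (v (ρ.symm (Fin.last d)))⁻¹ * v (ρ.symm k)) ℓ =
            ∑ ℓ, (AG i ℓ : ℂ) * psiBeta AG (fun _ => -Complex.I) (fun k => v (ρ.symm k)) ℓ :=
          Finset.sum_congr rfl (fun ℓ _ => by
            rw [psi_scale hst hAG hcne (u := fun k => v (ρ.symm k)) (fun k => rfl) ℓ])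
        rw [e1, equiv_sum hadj hedges hAG ρ v i, hsum (ρ.symm i)]
      · rw [jac_scale hst hAG hcne (u := fun k => v (ρ.symm k)) (fun k => rfl),
          jac_perm hadj hedges hAG ρ v, Matrix.rank_submatrix]
        exact hrank
    have hdl : discLocusG AG = ZClosure Sset := rfl
    intro ω
    constructor
    · intro hω
      rw [hdl] at hω ⊢
      exact zclosure_stable (fun k => σ.symm k) Sset (fun x hx => Sstab σ x hx) ω hω
    · intro hω
      rw [hdl] at hω ⊢
      have hS' : ∀ x ∈ Sset, (fun k => x (σ k)) ∈ Sset := by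
        intro x hx
        have := Sstab σ.symm x hx
        simpa using this
      have := zclosure_stable (fun k => σ k) Sset hS' _ hω
      have heq : (fun k => (fun k' => ω (σ.symm k')) (σ k)) = ω := by
        funext k
        simp
      rwa [heq] at this
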